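/- (Lemma 2) Let r > 0 and m = r^{−a}. Define π_{t,r}(u) = Σ_{k∈ℤ} p_t(u − 2rk) for u ∈ [−r,r], the density of the diffusion reflected at the edges of [−r,r]. Then π_{t,r}(u) = (1/r) π_{tm}(u/r) for u ∈ [−r,r], and for every t with tm ≥ 1, with K = ⌊tm⌋: sup_{u∈[−r,r]} |π_{t,r}(u) − 1/(2r)| ≤ (2/r) (1 − 4Q_1)^{K−1} · sup_{u∈[−2,2)} |P̄_1(u) − 1/4|. -/

import Mathlib

open MeasureTheory

/-- 4-periodization `P̄ₜ (u) = ∑ₖ pₜ (u - 4k)` of the family of densities `p`. -/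
noncomputable def Pbar (p : ℝ → ℝ → ℝ) (t u : ℝ) : ℝ := ∑' k : ℤ, p t (u - 4 * k)

/-- `Qₜ = inf_{u ∈ [-2,2)} P̄ₜ (u)`. -/
noncomputable def Qinf (p : ℝ → ℝ → ℝ) (t : ℝ) : ℝ := sInf (Pbar p t '' Set.Ico (-2 : ℝ) 2)

/-- `πₜ (u) = ∑ₖ pₜ (u - 2k)`, the density of the diffusion reflected at the edges
of `[-1,1]`. -/
noncomputable def piRefl (p : ℝ → ℝ → ℝ) (t u : ℝ) : ℝ := ∑' k : ℤ, p t (u - 2 * k)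

/-- `π_{t,r} (u) = ∑ₖ pₜ (u - 2rk)`, the density of the diffusion reflected at the
edges of `[-r,r]`. -/
noncomputable def piReflR (p : ℝ → ℝ → ℝ) (t r u : ℝ) : ℝ := ∑' k : ℤ, p t (u - 2 * r * k)

section L2AuxSec
open Set
open scoped ENNReal NNReal

namespace L2Aux

/-- ENNReal-valued periodization. -/
noncomputable def Fe (p : ℝ → ℝ → ℝ) (t u : ℝ) : ℝ≥0∞ := ∑' k : ℤ, ENNReal.ofReal (p t (u - 4 * k))

/-- The hypothesis bundle. -/
structure Nice (p : ℝ → ℝ → ℝ) : Prop where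
  meas : ∀ t, 0 < t → Measurable (p t)
  nn : ∀ t, 0 < t → ∀ u, 0 ≤ p t u
  even : ∀ t, 0 < t → ∀ u, p t (-u) = p t u
  one : ∀ t, 0 < t → ∫ u, p t u = 1
  bdd : ∀ t, 0 < t → ∃ C : ℝ, ∀ u, p t u ≤ C
  conv : ∀ s t : ℝ, 0 < s → 0 < t → ∀ u, p (s + t) u = ∫ v, p s v * p t (u - v)
  sum : ∀ t, 0 < t → ∀ u : ℝ, Summable fun k : ℤ => p t (u - 4 * k)

variable {p : ℝ → ℝ → ℝ} {t s : ℝ}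

theorem Pbar_nonneg (H : Nice p) (ht : 0 < t) (u : ℝ) : 0 ≤ Pbar p t u :=
  tsum_nonneg fun _ => H.nn t ht _

theorem ofReal_Pbar (H : Nice p) (ht : 0 < t) (u : ℝ) :
    ENNReal.ofReal (Pbar p t u) = Fe p t u :=
  ENNReal.ofReal_tsum_of_nonneg (fun _ => H.nn t ht _) (H.sum t ht u)

theorem Pbar_toReal (H : Nice p) (ht : 0 < t) (u : ℝ) :
    Pbar p t u = (Fe p t u).toReal := by
  rw [← ofReal_Pbar H ht, ENNReal.toReal_ofReal (Pbar_nonneg H ht u)]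

theorem Fe_lt_top (H : Nice p) (ht : 0 < t) (u : ℝ) : Fe p t u < ⊤ := by
  rw [← ofReal_Pbar H ht]; exact ENNReal.ofReal_lt_top

theorem measurable_Fe (H : Nice p) (ht : 0 < t) : Measurable (Fe p t) :=
  Measurable.ennreal_tsum fun k =>
    ((H.meas t ht).comp (measurable_id.sub measurable_const)).ennreal_ofReal

theorem measurable_Pbar (H : Nice p) (ht : 0 < t) : Measurable (Pbar p t) := by
  have : Pbar p t = fun u => (Fe p t u).toReal := funext (Pbar_toReal H ht)
  rw [this]; exact (measurable_Fe H ht).ennreal_toReal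

theorem Fe_periodic (n : ℤ) (u : ℝ) : Fe p t (u + 4 * n) = Fe p t u := by
  unfold Fe
  calc ∑' k : ℤ, ENNReal.ofReal (p t (u + 4 * n - 4 * k))
      = ∑' k : ℤ, ENNReal.ofReal (p t (u - 4 * ((Equiv.subRight n) k))) := by
        apply tsum_congr; intro k; congr 1
        simp only [Equiv.subRight_apply]
        push_cast; ring
    _ = ∑' k : ℤ, ENNReal.ofReal (p t (u - 4 * k)) :=
        (Equiv.subRight n).tsum_eq (fun k => ENNReal.ofReal (p t (u - 4 * k)))

theorem Fe_neg (H : Nice p) (ht : 0 < t) (u : ℝ) : Fe p t (-u) = Fe p t u := by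
  unfold Fe
  calc ∑' k : ℤ, ENNReal.ofReal (p t (-u - 4 * k))
      = ∑' k : ℤ, ENNReal.ofReal (p t (u - 4 * ((Equiv.neg ℤ) k))) := by
        apply tsum_congr; intro k
        rw [show -u - 4 * (k:ℝ) = -(u + 4 * k) by ring, H.even t ht]
        congr 1
        simp only [Equiv.neg_apply]
        push_cast; ring
    _ = ∑' k : ℤ, ENNReal.ofReal (p t (u - 4 * k)) :=
        (Equiv.neg ℤ).tsum_eq (fun k => ENNReal.ofReal (p t (u - 4 * k)))

theorem Pbar_even (H : Nice p) (ht : 0 < t) (u : ℝ) : Pbar p t (-u) = Pbar p t u := by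
  rw [Pbar_toReal H ht, Pbar_toReal H ht, Fe_neg H ht]

theorem Pbar_periodic (H : Nice p) (ht : 0 < t) (n : ℤ) (u : ℝ) :
    Pbar p t (u + 4 * n) = Pbar p t u := by
  rw [Pbar_toReal H ht, Pbar_toReal H ht, Fe_periodic]

/-- The equivalence between `ℤ` and `zmultiples (4:ℝ)`. -/
noncomputable def eZ : ℤ ≃ (AddSubgroup.zmultiples (4:ℝ)) :=
  Equiv.ofBijective
    (fun n => ⟨(n : ℝ) * 4, AddSubgroup.mem_zmultiples_iff.2 ⟨n, by simp [zsmul_eq_mul]⟩⟩)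
    ⟨fun a b h => by
      have : (a : ℝ) * 4 = (b : ℝ) * 4 := congrArg Subtype.val h
      exact_mod_cast mul_right_cancel₀ (by norm_num : (4:ℝ) ≠ 0) this,
     fun ⟨x, hx⟩ => by
      obtain ⟨k, hk⟩ := AddSubgroup.mem_zmultiples_iff.1 hx
      exact ⟨k, Subtype.ext (by simp [zsmul_eq_mul] at hk ⊢; linarith [hk])⟩⟩

theorem tile (f : ℝ → ℝ≥0∞) :
    ∫⁻ x, f x = ∑' k : ℤ, ∫⁻ x in Ioc (-2:ℝ) 2, f (4 * k + x) := by
  haveI : VAddInvariantMeasure (AddSubgroup.zmultiples (4:ℝ)) ℝ volume :=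
    ⟨fun c s _ => measure_preimage_add _ _ _⟩
  have h := (isAddFundamentalDomain_Ioc (by norm_num : (0:ℝ) < 4) (-2)
    volume).lintegral_eq_tsum'' f
  rw [show (-2:ℝ) + 4 = 2 by norm_num] at h
  rw [h, ← eZ.tsum_eq (fun g => ∫⁻ x in Ioc (-2:ℝ) 2, f (g +ᵥ x))]
  apply tsum_congr; intro k
  apply lintegral_congr; intro x
  congr 1
  show ((eZ k : AddSubgroup.zmultiples (4:ℝ)) : ℝ) + x = 4 * k + x
  show ((k:ℝ) * 4) + x = 4 * (k:ℝ) + x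
  ring

theorem integrable_p (H : Nice p) (ht : 0 < t) : Integrable (p t) := by
  by_contra h
  have := H.one t ht
  rw [integral_undef h] at this
  norm_num at this

theorem lintegral_p_line (H : Nice p) (ht : 0 < t) :
    ∫⁻ x, ENNReal.ofReal (p t x) = 1 := by
  rw [← ofReal_integral_eq_lintegral_ofReal (integrable_p H ht) (ae_of_all _ (H.nn t ht)),
    H.one t ht, ENNReal.ofReal_one]

theorem lintegral_I_Fe (H : Nice p) (ht : 0 < t) :
    ∫⁻ x in Ioc (-2:ℝ) 2, Fe p t x = 1 := by
  have h1 : ∫⁻ x in Ioc (-2:ℝ) 2, Fe p t x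
      = ∑' k : ℤ, ∫⁻ x in Ioc (-2:ℝ) 2, ENNReal.ofReal (p t (x - 4 * k)) := by
    unfold Fe
    exact lintegral_tsum fun k =>
      ((H.meas t ht).comp (measurable_id.sub measurable_const)).ennreal_ofReal.aemeasurable
  have h2 : ∑' k : ℤ, ∫⁻ x in Ioc (-2:ℝ) 2, ENNReal.ofReal (p t (x - 4 * k))
      = ∑' k : ℤ, ∫⁻ x in Ioc (-2:ℝ) 2, ENNReal.ofReal (p t (4 * k + x)) := by
    rw [← (Equiv.neg ℤ).tsum_eq (fun k => ∫⁻ x in Ioc (-2:ℝ) 2, ENNReal.ofReal (p t (4 * k + x)))]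
    apply tsum_congr; intro k
    apply lintegral_congr; intro x
    congr 2
    simp only [Equiv.neg_apply]
    push_cast; ring
  rw [h1, h2, ← tile (fun x => ENNReal.ofReal (p t x)), lintegral_p_line H ht]

theorem refl_shift (f : ℝ → ℝ≥0∞) (hper : ∀ (n : ℤ) (x : ℝ), f (x + 4 * n) = f x) (c : ℝ) :
    ∫⁻ x in Ioc (-2:ℝ) 2, f (c - x) = ∫⁻ x in Ioc (-2:ℝ) 2, f x := by
  haveI : VAddInvariantMeasure (AddSubgroup.zmultiples (4:ℝ)) ℝ volume :=
    ⟨fun c s _ => measure_preimage_add _ _ _⟩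
  have hper' : ∀ (g : AddSubgroup.zmultiples (4:ℝ)) (x : ℝ), f (g +ᵥ x) = f x := by
    rintro ⟨g, hg⟩ x
    obtain ⟨k, hk⟩ := AddSubgroup.mem_zmultiples_iff.1 hg
    have : (⟨g, hg⟩ : AddSubgroup.zmultiples (4:ℝ)) +ᵥ x = x + 4 * k := by
      show g + x = x + 4 * k
      rw [← hk]; push_cast [zsmul_eq_mul]; ring
    rw [this, hper]
  have h1 : ∫⁻ x in Ioc (-2:ℝ) 2, f (c - x)
      = ∫⁻ y in (fun x : ℝ => c - x) '' Ioc (-2:ℝ) 2, f y :=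
    (Measure.measurePreserving_sub_left volume c).setLIntegral_comp_emb
      (MeasurableEquiv.subLeft c).measurableEmbedding f _
  rw [h1, Set.image_const_sub_Ioc]
  have h3 : ∫⁻ y in Ico (c - 2) (c - (-2)), f y = ∫⁻ y in Ioc (c - 2) (c - 2 + 4), f y := by
    rw [setLIntegral_congr Ico_ae_eq_Ioc]
    congr 1
    ring
  rw [h3]
  have h4 := (isAddFundamentalDomain_Ioc (by norm_num : (0:ℝ) < 4) (c - 2)
      volume).setLIntegral_eq
    (isAddFundamentalDomain_Ioc (by norm_num : (0:ℝ) < 4) (-2) volume) f hper'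
  rw [show (-2:ℝ) + 4 = 2 by norm_num] at h4
  exact h4


theorem ofReal_p_add (H : Nice p) (hs : 0 < s) (ht : 0 < t) (w : ℝ) :
    ENNReal.ofReal (p (s + t) w)
      = ∫⁻ v, ENNReal.ofReal (p s v) * ENNReal.ofReal (p t (w - v)) := by
  obtain ⟨C, hC⟩ := H.bdd t ht
  have hint : Integrable (fun v => p s v * p t (w - v)) := by
    apply Integrable.mono' ((integrable_p H hs).const_mul C)
    · exact ((H.meas s hs).mul
        ((H.meas t ht).comp (measurable_const.sub measurable_id))).aestronglyMeasurable
    · apply ae_of_all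
      intro v
      rw [Real.norm_eq_abs, abs_of_nonneg (mul_nonneg (H.nn s hs v) (H.nn t ht _))]
      rw [mul_comm C]
      exact mul_le_mul_of_nonneg_left (hC _) (H.nn s hs v)
  rw [H.conv s t hs ht w,
    ofReal_integral_eq_lintegral_ofReal hint
      (ae_of_all _ (fun v => mul_nonneg (H.nn s hs v) (H.nn t ht _)))]
  apply lintegral_congr
  intro v
  exact ENNReal.ofReal_mul (H.nn s hs v)

theorem Fe_conv_line (H : Nice p) (hs : 0 < s) (ht : 0 < t) (u : ℝ) :
    Fe p (s + t) u = ∫⁻ v, ENNReal.ofReal (p s v) * Fe p t (u - v) := by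
  unfold Fe
  have h1 : ∀ k : ℤ, ENNReal.ofReal (p (s + t) (u - 4 * k))
      = ∫⁻ v, ENNReal.ofReal (p s v) * ENNReal.ofReal (p t (u - 4 * k - v)) :=
    fun k => ofReal_p_add H hs ht _
  calc ∑' k : ℤ, ENNReal.ofReal (p (s + t) (u - 4 * k))
      = ∑' k : ℤ, ∫⁻ v, ENNReal.ofReal (p s v) * ENNReal.ofReal (p t (u - 4 * k - v)) :=
        tsum_congr h1
    _ = ∫⁻ v, ∑' k : ℤ, ENNReal.ofReal (p s v) * ENNReal.ofReal (p t (u - 4 * k - v)) :=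
        (lintegral_tsum fun k => ((H.meas s hs).ennreal_ofReal.mul
          ((H.meas t ht).comp ((measurable_const.sub measurable_id))).ennreal_ofReal).aemeasurable).symm
    _ = ∫⁻ v, ENNReal.ofReal (p s v) * ∑' k : ℤ, ENNReal.ofReal (p t (u - v - 4 * k)) := by
        apply lintegral_congr
        intro v
        rw [ENNReal.tsum_mul_left]
        congr 1
        apply tsum_congr
        intro k
        congr 2
        ring

theorem Fe_conv (H : Nice p) (hs : 0 < s) (ht : 0 < t) (u : ℝ) :
    Fe p (s + t) u = ∫⁻ v in Ioc (-2:ℝ) 2, Fe p s v * Fe p t (u - v) := by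
  rw [Fe_conv_line H hs ht u,
    tile (fun v => ENNReal.ofReal (p s v) * Fe p t (u - v))]
  have h1 : ∀ k : ℤ, ∫⁻ v in Ioc (-2:ℝ) 2,
      ENNReal.ofReal (p s (4 * k + v)) * Fe p t (u - (4 * k + v))
      = ∫⁻ v in Ioc (-2:ℝ) 2, ENNReal.ofReal (p s (v - 4 * ((Equiv.neg ℤ) k))) * Fe p t (u - v) := by
    intro k
    apply lintegral_congr
    intro v
    congr 1
    · congr 1; simp only [Equiv.neg_apply]; push_cast; ring
    · rw [show u - (4 * (k:ℝ) + v) = (u - v) + 4 * (-k : ℤ) by push_cast; ring,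
        Fe_periodic]
  calc ∑' k : ℤ, ∫⁻ v in Ioc (-2:ℝ) 2, ENNReal.ofReal (p s (4 * k + v)) * Fe p t (u - (4 * k + v))
      = ∑' k : ℤ, ∫⁻ v in Ioc (-2:ℝ) 2,
          ENNReal.ofReal (p s (v - 4 * ((Equiv.neg ℤ) k))) * Fe p t (u - v) :=
        tsum_congr h1
    _ = ∑' k : ℤ, ∫⁻ v in Ioc (-2:ℝ) 2, ENNReal.ofReal (p s (v - 4 * k)) * Fe p t (u - v) :=
        (Equiv.neg ℤ).tsum_eq (fun k => ∫⁻ v in Ioc (-2:ℝ) 2,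
          ENNReal.ofReal (p s (v - 4 * k)) * Fe p t (u - v))
    _ = ∫⁻ v in Ioc (-2:ℝ) 2, ∑' k : ℤ, ENNReal.ofReal (p s (v - 4 * k)) * Fe p t (u - v) :=
        (lintegral_tsum fun k => (((H.meas s hs).comp
          (measurable_id.sub measurable_const)).ennreal_ofReal.mul
          ((measurable_Fe H ht).comp (measurable_const.sub measurable_id))).aemeasurable).symm
    _ = ∫⁻ v in Ioc (-2:ℝ) 2, Fe p s v * Fe p t (u - v) := by
        apply lintegral_congr
        intro v
        rw [ENNReal.tsum_mul_right]
        rfl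


theorem integrableOn_Pbar (H : Nice p) (ht : 0 < t) :
    IntegrableOn (Pbar p t) (Ioc (-2:ℝ) 2) := by
  refine ⟨(measurable_Pbar H ht).aestronglyMeasurable, ?_⟩
  rw [hasFiniteIntegral_iff_ofReal (ae_of_all _ (Pbar_nonneg H ht))]
  have : ∫⁻ v in Ioc (-2:ℝ) 2, ENNReal.ofReal (Pbar p t v) = 1 := by
    rw [lintegral_congr (ofReal_Pbar H ht)]
    exact lintegral_I_Fe H ht
  rw [this]; exact ENNReal.one_lt_top

theorem setIntegral_Pbar (H : Nice p) (ht : 0 < t) :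
    ∫ v in Ioc (-2:ℝ) 2, Pbar p t v = 1 := by
  rw [integral_eq_lintegral_of_nonneg_ae (ae_of_all _ (Pbar_nonneg H ht))
    (measurable_Pbar H ht).aestronglyMeasurable]
  rw [lintegral_congr (ofReal_Pbar H ht), lintegral_I_Fe H ht]
  simp

theorem lintegral_prod (H : Nice p) (hs : 0 < s) (ht : 0 < t) (u : ℝ) :
    ∫⁻ v in Ioc (-2:ℝ) 2, ENNReal.ofReal (Pbar p s v * Pbar p t (u - v))
      = ENNReal.ofReal (Pbar p (s + t) u) := by
  have h1 : ∀ v, ENNReal.ofReal (Pbar p s v * Pbar p t (u - v))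
      = Fe p s v * Fe p t (u - v) := by
    intro v
    rw [ENNReal.ofReal_mul (Pbar_nonneg H hs v), ofReal_Pbar H hs, ofReal_Pbar H ht]
  rw [lintegral_congr h1, ← Fe_conv H hs ht u, ofReal_Pbar H (by linarith : (0:ℝ) < s + t)]

theorem integrableOn_prod (H : Nice p) (hs : 0 < s) (ht : 0 < t) (u : ℝ) :
    IntegrableOn (fun v => Pbar p s v * Pbar p t (u - v)) (Ioc (-2:ℝ) 2) := by
  refine ⟨((measurable_Pbar H hs).mul ((measurable_Pbar H ht).comp
    (measurable_const.sub measurable_id))).aestronglyMeasurable, ?_⟩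
  rw [hasFiniteIntegral_iff_ofReal (ae_of_all _
    (fun v => mul_nonneg (Pbar_nonneg H hs v) (Pbar_nonneg H ht _)))]
  rw [lintegral_prod H hs ht u]
  exact ENNReal.ofReal_lt_top

theorem setIntegral_prod (H : Nice p) (hs : 0 < s) (ht : 0 < t) (u : ℝ) :
    ∫ v in Ioc (-2:ℝ) 2, Pbar p s v * Pbar p t (u - v) = Pbar p (s + t) u := by
  have hm : Measurable fun v : ℝ => Pbar p s v * Pbar p t (u - v) :=
    (measurable_Pbar H hs).mul ((measurable_Pbar H ht).comp
      (measurable_const.sub measurable_id))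
  rw [integral_eq_lintegral_of_nonneg_ae (ae_of_all _
    (fun v => mul_nonneg (Pbar_nonneg H hs v) (Pbar_nonneg H ht _)))
    hm.aestronglyMeasurable]
  rw [lintegral_prod H hs ht u,
    ENNReal.toReal_ofReal (Pbar_nonneg H (by linarith : (0:ℝ) < s + t) u)]

theorem lintegral_shift_Fe (H : Nice p) (ht : 0 < t) (u : ℝ) :
    ∫⁻ v in Ioc (-2:ℝ) 2, Fe p t (u - v) = 1 := by
  rw [refl_shift (Fe p t) (fun n x => Fe_periodic n x) u]
  exact lintegral_I_Fe H ht

theorem integrableOn_shift (H : Nice p) (ht : 0 < t) (u : ℝ) :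
    IntegrableOn (fun v => Pbar p t (u - v)) (Ioc (-2:ℝ) 2) := by
  refine ⟨((measurable_Pbar H ht).comp
    (measurable_const.sub measurable_id)).aestronglyMeasurable, ?_⟩
  rw [hasFiniteIntegral_iff_ofReal (ae_of_all _ (fun v => Pbar_nonneg H ht _))]
  have : ∫⁻ v in Ioc (-2:ℝ) 2, ENNReal.ofReal (Pbar p t (u - v)) = 1 := by
    rw [lintegral_congr (fun v => ofReal_Pbar H ht (u - v))]
    exact lintegral_shift_Fe H ht u
  rw [this]; exact ENNReal.one_lt_top

theorem setIntegral_shift (H : Nice p) (ht : 0 < t) (u : ℝ) :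
    ∫ v in Ioc (-2:ℝ) 2, Pbar p t (u - v) = 1 := by
  have hm : Measurable fun v : ℝ => Pbar p t (u - v) :=
    (measurable_Pbar H ht).comp (measurable_const.sub measurable_id)
  rw [integral_eq_lintegral_of_nonneg_ae (ae_of_all _ (fun v => Pbar_nonneg H ht _))
    hm.aestronglyMeasurable]
  rw [lintegral_congr (fun v => ofReal_Pbar H ht (u - v)), lintegral_shift_Fe H ht u]
  simp

theorem Qinf_le_Pbar (H : Nice p) (ht : 0 < t) (v : ℝ) : Qinf p t ≤ Pbar p t v := by
  set n : ℤ := ⌊(v + 2) / 4⌋ with hn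
  have h1 : (n : ℝ) ≤ (v + 2) / 4 := Int.floor_le _
  have h2 : (v + 2) / 4 < n + 1 := Int.lt_floor_add_one _
  have hw : v - 4 * n ∈ Ico (-2:ℝ) 2 := by
    constructor <;> [nlinarith; nlinarith]
  have h3 : Pbar p t (v - 4 * n) = Pbar p t v := by
    have h4 := Pbar_periodic H ht n (v - 4 * n)
    rw [show v - 4 * (n:ℝ) + 4 * n = v by ring] at h4
    exact h4.symm
  rw [← h3]
  apply csInf_le
  · refine ⟨0, ?_⟩
    rintro x ⟨y, _, rfl⟩
    exact Pbar_nonneg H ht y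
  · exact ⟨v - 4 * n, hw, rfl⟩

theorem Qinf_nonneg (H : Nice p) (ht : 0 < t) : 0 ≤ Qinf p t := by
  apply le_csInf
  · exact ⟨Pbar p t 0, ⟨0, by norm_num, rfl⟩⟩
  · rintro x ⟨y, _, rfl⟩
    exact Pbar_nonneg H ht y

theorem four_Qinf_le_one (H : Nice p) (ht : 0 < t) : 4 * Qinf p t ≤ 1 := by
  have h1 : ∫ _v in Ioc (-2:ℝ) 2, Qinf p t ≤ ∫ v in Ioc (-2:ℝ) 2, Pbar p t v := by
    apply integral_mono (integrableOn_const (C := Qinf p t) (s := Ioc (-2:ℝ) 2) (μ := volume) (by simp [Real.volume_Ioc]))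
      (integrableOn_Pbar H ht)
    intro v
    exact Qinf_le_Pbar H ht v
  rw [setIntegral_Pbar H ht, setIntegral_const, Real.volume_real_Ioc_of_le (by norm_num : (-2:ℝ) ≤ 2),
    show (2:ℝ) - (-2) = 4 by norm_num] at h1
  simpa [smul_eq_mul] using h1


theorem contraction (H : Nice p) (hs : 0 < s) (ht : 0 < t) {M : ℝ}
    (hM : ∀ w, |Pbar p t w - 1/4| ≤ M) (u : ℝ) :
    |Pbar p (s + t) u - 1/4| ≤ (1 - 4 * Qinf p s) * M := by
  set Q := Qinf p s with hQdef
  have hQP : ∀ v, Q ≤ Pbar p s v := Qinf_le_Pbar H hs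
  have i1 := integrableOn_prod H hs ht u
  have i2 := (integrableOn_Pbar H hs).const_mul (1/4 : ℝ)
  have i3 := (integrableOn_shift H ht u).const_mul Q
  have i4 : IntegrableOn (fun _ : ℝ => Q * (1/4)) (Ioc (-2:ℝ) 2) :=
    integrableOn_const (by simp [Real.volume_Ioc])
  have e1 : ∀ v : ℝ, (Pbar p s v - Q) * (Pbar p t (u - v) - 1/4)
      = (Pbar p s v * Pbar p t (u - v) - (1/4) * Pbar p s v)
        - (Q * Pbar p t (u - v) - Q * (1/4)) := fun v => by ring
  have h0 : (∫ v in Ioc (-2:ℝ) 2, (Pbar p s v - Q) * (Pbar p t (u - v) - 1/4))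
      = ∫ v in Ioc (-2:ℝ) 2, ((Pbar p s v * Pbar p t (u - v) - (1/4) * Pbar p s v)
        - (Q * Pbar p t (u - v) - Q * (1/4))) := integral_congr_ae (ae_of_all _ e1)
  have hsub : (∫ v in Ioc (-2:ℝ) 2, ((Pbar p s v * Pbar p t (u - v) - (1/4) * Pbar p s v)
        - (Q * Pbar p t (u - v) - Q * (1/4))))
      = (∫ v in Ioc (-2:ℝ) 2, (Pbar p s v * Pbar p t (u - v) - (1/4) * Pbar p s v))
        - ∫ v in Ioc (-2:ℝ) 2, (Q * Pbar p t (u - v) - Q * (1/4)) :=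
    integral_sub (i1.sub i2) (i3.sub i4)
  have h12 : (∫ v in Ioc (-2:ℝ) 2, (Pbar p s v * Pbar p t (u - v) - (1/4) * Pbar p s v))
      = (∫ v in Ioc (-2:ℝ) 2, Pbar p s v * Pbar p t (u - v))
        - ∫ v in Ioc (-2:ℝ) 2, (1/4) * Pbar p s v := integral_sub i1 i2
  have h34 : (∫ v in Ioc (-2:ℝ) 2, (Q * Pbar p t (u - v) - Q * (1/4)))
      = (∫ v in Ioc (-2:ℝ) 2, Q * Pbar p t (u - v))
        - ∫ _v in Ioc (-2:ℝ) 2, Q * (1/4) := integral_sub i3 i4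
  have hc2 : (∫ v in Ioc (-2:ℝ) 2, (1/4 : ℝ) * Pbar p s v)
      = (1/4) * ∫ v in Ioc (-2:ℝ) 2, Pbar p s v := integral_const_mul _ _
  have hc3 : (∫ v in Ioc (-2:ℝ) 2, Q * Pbar p t (u - v))
      = Q * ∫ v in Ioc (-2:ℝ) 2, Pbar p t (u - v) := integral_const_mul _ _
  have hc4 : (∫ _v in Ioc (-2:ℝ) 2, Q * (1/4)) = Q := by
    rw [setIntegral_const, Real.volume_real_Ioc_of_le (by norm_num : (-2:ℝ) ≤ 2), show (2:ℝ) - (-2) = 4 by norm_num, smul_eq_mul]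
    ring
  have j1 := setIntegral_prod H hs ht u
  have j2 := setIntegral_Pbar H hs
  have j3 := setIntegral_shift H ht u
  have key : Pbar p (s + t) u - 1/4
      = ∫ v in Ioc (-2:ℝ) 2, (Pbar p s v - Q) * (Pbar p t (u - v) - 1/4) := by
    rw [h0, hsub, h12, h34, hc2, hc3, hc4, j1, j2, j3]
    ring
  rw [key]
  have habs : |∫ v in Ioc (-2:ℝ) 2, (Pbar p s v - Q) * (Pbar p t (u - v) - 1/4)|
      ≤ ∫ v in Ioc (-2:ℝ) 2, |(Pbar p s v - Q) * (Pbar p t (u - v) - 1/4)| := by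
    simpa [Real.norm_eq_abs, abs_mul] using
      norm_integral_le_integral_norm (μ := volume.restrict (Ioc (-2:ℝ) 2))
        (fun v => (Pbar p s v - Q) * (Pbar p t (u - v) - 1/4))
  have iprod : IntegrableOn
      (fun v => (Pbar p s v - Q) * (Pbar p t (u - v) - 1/4)) (Ioc (-2:ℝ) 2) := by
    have e1' : (fun v : ℝ => (Pbar p s v - Q) * (Pbar p t (u - v) - 1/4))
        = fun v => (Pbar p s v * Pbar p t (u - v) - (1/4) * Pbar p s v)
          - (Q * Pbar p t (u - v) - Q * (1/4)) := funext fun v => by ring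
    rw [IntegrableOn, e1']
    exact (i1.sub i2).sub (i3.sub i4)
  have iQ : IntegrableOn (fun _ : ℝ => Q) (Ioc (-2:ℝ) 2) :=
    integrableOn_const (by simp [Real.volume_Ioc])
  have irhs : IntegrableOn (fun v => (Pbar p s v - Q) * M) (Ioc (-2:ℝ) 2) :=
    ((integrableOn_Pbar H hs).sub iQ).mul_const M
  have hmono : ∫ v in Ioc (-2:ℝ) 2, |(Pbar p s v - Q) * (Pbar p t (u - v) - 1/4)|
      ≤ ∫ v in Ioc (-2:ℝ) 2, (Pbar p s v - Q) * M := by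
    apply integral_mono iprod.abs irhs
    intro v
    show |(Pbar p s v - Q) * (Pbar p t (u - v) - 1/4)| ≤ (Pbar p s v - Q) * M
    rw [abs_mul, abs_of_nonneg (sub_nonneg.2 (hQP v))]
    exact mul_le_mul_of_nonneg_left (hM _) (sub_nonneg.2 (hQP v))
  have hval : ∫ v in Ioc (-2:ℝ) 2, (Pbar p s v - Q) * M = (1 - 4 * Q) * M := by
    have hmul : (∫ v in Ioc (-2:ℝ) 2, (Pbar p s v - Q) * M)
        = (∫ v in Ioc (-2:ℝ) 2, (Pbar p s v - Q)) * M := integral_mul_const M _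
    have hQint : (∫ _v in Ioc (-2:ℝ) 2, Q) = 4 * Q := by
      rw [setIntegral_const, Real.volume_real_Ioc_of_le (by norm_num : (-2:ℝ) ≤ 2), show (2:ℝ) - (-2) = 4 by norm_num, smul_eq_mul]
    have hsubQ : (∫ v in Ioc (-2:ℝ) 2, (Pbar p s v - Q))
        = (∫ v in Ioc (-2:ℝ) 2, Pbar p s v) - ∫ _v in Ioc (-2:ℝ) 2, Q :=
      integral_sub (integrableOn_Pbar H hs) iQ
    rw [hmul, hsubQ, hQint, j2]
  calc |∫ v in Ioc (-2:ℝ) 2, (Pbar p s v - Q) * (Pbar p t (u - v) - 1/4)|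
      ≤ ∫ v in Ioc (-2:ℝ) 2, |(Pbar p s v - Q) * (Pbar p t (u - v) - 1/4)| := habs
    _ ≤ ∫ v in Ioc (-2:ℝ) 2, (Pbar p s v - Q) * M := hmono
    _ = (1 - 4 * Q) * M := hval


theorem Pbar_le_Pbar_zero (H : Nice p) (ht : 0 < t) (u : ℝ) : Pbar p t u ≤ Pbar p t 0 := by
  set s := t / 2 with hsdef
  have hs : 0 < s := by positivity
  have hts : s + s = t := add_halves t
  have hss : 0 < s + s := by linarith
  -- lintegral of the square
  have l0 : ∫⁻ v in Ioc (-2:ℝ) 2, Fe p s v * Fe p s v = Fe p (s + s) 0 := by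
    rw [Fe_conv H hs hs 0]
    apply lintegral_congr
    intro v
    rw [zero_sub, Fe_neg H hs]
  have hof : ∀ v : ℝ, ENNReal.ofReal (Pbar p s v * Pbar p s v) = Fe p s v * Fe p s v := by
    intro v
    rw [ENNReal.ofReal_mul (Pbar_nonneg H hs v), ofReal_Pbar H hs]
  have hmsq : Measurable fun v : ℝ => Pbar p s v * Pbar p s v :=
    (measurable_Pbar H hs).mul (measurable_Pbar H hs)
  have hmsq2 : Measurable fun v : ℝ => Pbar p s (u - v) * Pbar p s (u - v) := by
    have hsub : Measurable fun v : ℝ => u - v := measurable_const.sub measurable_id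
    exact hmsq.comp hsub
  have lsq : ∫⁻ v in Ioc (-2:ℝ) 2, ENNReal.ofReal (Pbar p s v * Pbar p s v)
      = Fe p (s + s) 0 := by rw [lintegral_congr hof, l0]
  have lsq2 : ∫⁻ v in Ioc (-2:ℝ) 2, ENNReal.ofReal (Pbar p s (u - v) * Pbar p s (u - v))
      = Fe p (s + s) 0 := by
    have hc : ∀ v : ℝ, ENNReal.ofReal (Pbar p s (u - v) * Pbar p s (u - v))
        = (fun x => Fe p s x * Fe p s x) (u - v) := fun v => hof (u - v)
    rw [lintegral_congr hc,
      refl_shift (fun x => Fe p s x * Fe p s x) (fun n x => by simp only [Fe_periodic]) u, l0]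
  have isq : IntegrableOn (fun v => Pbar p s v * Pbar p s v) (Ioc (-2:ℝ) 2) := by
    refine ⟨hmsq.aestronglyMeasurable, ?_⟩
    rw [hasFiniteIntegral_iff_ofReal (ae_of_all _
      (fun v => mul_nonneg (Pbar_nonneg H hs v) (Pbar_nonneg H hs v))), lsq]
    exact Fe_lt_top H hss 0
  have isq2 : IntegrableOn (fun v => Pbar p s (u - v) * Pbar p s (u - v)) (Ioc (-2:ℝ) 2) := by
    refine ⟨hmsq2.aestronglyMeasurable, ?_⟩
    rw [hasFiniteIntegral_iff_ofReal (ae_of_all _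
      (fun v => mul_nonneg (Pbar_nonneg H hs _) (Pbar_nonneg H hs _))), lsq2]
    exact Fe_lt_top H hss 0
  have eq_int : ∫ v in Ioc (-2:ℝ) 2, Pbar p s (u - v) * Pbar p s (u - v)
      = ∫ v in Ioc (-2:ℝ) 2, Pbar p s v * Pbar p s v := by
    rw [integral_eq_lintegral_of_nonneg_ae (ae_of_all _
      (fun v => mul_nonneg (Pbar_nonneg H hs _) (Pbar_nonneg H hs _)))
      hmsq2.aestronglyMeasurable,
      integral_eq_lintegral_of_nonneg_ae (ae_of_all _
      (fun v => mul_nonneg (Pbar_nonneg H hs _) (Pbar_nonneg H hs _)))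
      hmsq.aestronglyMeasurable, lsq, lsq2]
  have hsq_val : ∫ v in Ioc (-2:ℝ) 2, Pbar p s v * Pbar p s v = Pbar p t 0 := by
    have h1 : (∫ v in Ioc (-2:ℝ) 2, Pbar p s v * Pbar p s v)
        = ∫ v in Ioc (-2:ℝ) 2, Pbar p s v * Pbar p s (0 - v) :=
      integral_congr_ae (ae_of_all _ (fun v => by
        show Pbar p s v * Pbar p s v = Pbar p s v * Pbar p s (0 - v)
        rw [zero_sub, Pbar_even H hs]))
    rw [h1, setIntegral_prod H hs hs 0, hts]
  have hmain : Pbar p t u = ∫ v in Ioc (-2:ℝ) 2, Pbar p s v * Pbar p s (u - v) := by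
    rw [setIntegral_prod H hs hs u, hts]
  have hintsum : IntegrableOn (fun v =>
      (1/2) * (Pbar p s v * Pbar p s v) + (1/2) * (Pbar p s (u - v) * Pbar p s (u - v)))
      (Ioc (-2:ℝ) 2) := (isq.const_mul _).add (isq2.const_mul _)
  have hle : ∫ v in Ioc (-2:ℝ) 2, Pbar p s v * Pbar p s (u - v)
      ≤ ∫ v in Ioc (-2:ℝ) 2,
        ((1/2) * (Pbar p s v * Pbar p s v) + (1/2) * (Pbar p s (u - v) * Pbar p s (u - v))) := by
    apply integral_mono (by rw [show s + s = t from hts] at *; exact integrableOn_prod H hs hs u)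
      hintsum
    intro v
    show Pbar p s v * Pbar p s (u - v) ≤ _
    nlinarith [sq_nonneg (Pbar p s v - Pbar p s (u - v))]
  have hadd : ∫ v in Ioc (-2:ℝ) 2,
      ((1/2) * (Pbar p s v * Pbar p s v) + (1/2) * (Pbar p s (u - v) * Pbar p s (u - v)))
      = (∫ v in Ioc (-2:ℝ) 2, (1/2) * (Pbar p s v * Pbar p s v))
        + ∫ v in Ioc (-2:ℝ) 2, (1/2) * (Pbar p s (u - v) * Pbar p s (u - v)) :=
    integral_add (isq.const_mul _) (isq2.const_mul _)
  have hm1 : (∫ v in Ioc (-2:ℝ) 2, (1/2 : ℝ) * (Pbar p s v * Pbar p s v))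
      = (1/2) * ∫ v in Ioc (-2:ℝ) 2, Pbar p s v * Pbar p s v := integral_const_mul _ _
  have hm2 : (∫ v in Ioc (-2:ℝ) 2, (1/2 : ℝ) * (Pbar p s (u - v) * Pbar p s (u - v)))
      = (1/2) * ∫ v in Ioc (-2:ℝ) 2, Pbar p s (u - v) * Pbar p s (u - v) := integral_const_mul _ _
  rw [hmain]
  calc ∫ v in Ioc (-2:ℝ) 2, Pbar p s v * Pbar p s (u - v)
      ≤ _ := hle
    _ = Pbar p t 0 := by rw [hadd, hm1, hm2, eq_int, hsq_val]; ring

theorem abs_le_M (H : Nice p) (w : ℝ) :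
    |Pbar p 1 w - 1/4| ≤ sSup ((fun u => |Pbar p 1 u - 1/4|) '' Ico (-2:ℝ) 2) := by
  have hbdd : BddAbove ((fun u => |Pbar p 1 u - 1/4|) '' Ico (-2:ℝ) 2) := by
    refine ⟨Pbar p 1 0 + 1/4, ?_⟩
    rintro x ⟨y, _, rfl⟩
    calc |Pbar p 1 y - 1/4| ≤ |Pbar p 1 y| + |(1:ℝ)/4| := abs_sub _ _
      _ = Pbar p 1 y + 1/4 := by
          rw [abs_of_nonneg (Pbar_nonneg H one_pos y)]; norm_num
      _ ≤ Pbar p 1 0 + 1/4 := by linarith [Pbar_le_Pbar_zero H one_pos y]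
  set n : ℤ := ⌊(w + 2) / 4⌋ with hn
  have h1 : (n : ℝ) ≤ (w + 2) / 4 := Int.floor_le _
  have h2 : (w + 2) / 4 < n + 1 := Int.lt_floor_add_one _
  have hw : w - 4 * n ∈ Ico (-2:ℝ) 2 := by constructor <;> [nlinarith; nlinarith]
  have h3 : Pbar p 1 (w - 4 * n) = Pbar p 1 w := by
    have h4 := Pbar_periodic H one_pos n (w - 4 * n)
    rw [show w - 4 * (n:ℝ) + 4 * n = w by ring] at h4
    exact h4.symm
  rw [← h3]
  exact le_csSup hbdd ⟨w - 4 * n, hw, rfl⟩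

theorem M_nonneg (H : Nice p) :
    0 ≤ sSup ((fun u => |Pbar p 1 u - 1/4|) '' Ico (-2:ℝ) 2) :=
  le_trans (abs_nonneg _) (abs_le_M H 0)

theorem chain (H : Nice p) : ∀ n : ℕ, ∀ s : ℝ, 1 ≤ s → ⌊s⌋₊ = n + 1 → ∀ u,
    |Pbar p s u - 1/4| ≤ (1 - 4 * Qinf p 1) ^ n
      * sSup ((fun u => |Pbar p 1 u - 1/4|) '' Ico (-2:ℝ) 2) := by
  intro n
  induction n with
  | zero =>
    intro s hs1 _ u
    rw [pow_zero, one_mul]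
    rcases eq_or_lt_of_le hs1 with h | h
    · rw [← h]; exact abs_le_M H u
    · have hs0 : 0 < s - 1 := by linarith
      have hc := contraction H hs0 one_pos (abs_le_M H) u
      rw [show s - 1 + 1 = s by ring] at hc
      refine le_trans hc ?_
      apply mul_le_of_le_one_left (M_nonneg H)
      have := Qinf_nonneg H hs0
      linarith
  | succ n ih =>
    intro s hs1 hfl u
    have hs0 : (0:ℝ) ≤ s := by linarith
    have h2 : ((n:ℝ) + 2) ≤ s := by
      have := Nat.floor_le hs0
      rw [hfl] at this
      push_cast at this
      linarith
    have h3 : s < (n:ℝ) + 3 := by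
      have := Nat.lt_floor_add_one s
      rw [hfl] at this
      push_cast at this
      linarith
    have hfl' : ⌊s - 1⌋₊ = n + 1 := by
      rw [Nat.floor_eq_iff (by linarith)]
      constructor <;> [push_cast; push_cast] <;> linarith
    have hb := ih (s - 1) (by linarith) hfl'
    have hc := contraction H one_pos (by linarith : (0:ℝ) < s - 1) hb u
    rw [show (1:ℝ) + (s - 1) = s by ring] at hc
    refine le_trans hc ?_
    rw [← mul_assoc, ← pow_succ']

/-- even integers equiv -/
noncomputable def eEven : ℤ ≃ {k : ℤ | Even k} :=
  Equiv.ofBijective (fun j => ⟨2 * j, ⟨j, by ring⟩⟩)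
    ⟨fun a b h => by
      have : 2 * a = 2 * b := congrArg Subtype.val h
      omega,
     fun ⟨k, hk⟩ => by
      obtain ⟨j, hj⟩ := hk
      exact ⟨j, Subtype.ext (by simp; omega)⟩⟩

noncomputable def eOdd : ℤ ≃ {k : ℤ | ¬ Even k} :=
  Equiv.ofBijective (fun j => ⟨2 * j + 1, by simp [Int.even_add_one, Int.even_mul]⟩)
    ⟨fun a b h => by
      have : 2 * a + 1 = 2 * b + 1 := congrArg Subtype.val h
      omega,
     fun ⟨k, hk⟩ => by
      have hk' : Odd k := Int.not_even_iff_odd.1 hk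
      obtain ⟨j, hj⟩ := hk'
      exact ⟨j, Subtype.ext (by simp; omega)⟩⟩

theorem piRefl_split (H : Nice p) (ht : 0 < t) (w : ℝ) :
    piRefl p t w = Pbar p t w + Pbar p t (w - 2) := by
  set f : ℤ → ℝ := fun k => p t (w - 2 * k) with hf
  have hA : HasSum (fun j : ℤ => p t (w - 4 * j)) (Pbar p t w) := (H.sum t ht w).hasSum
  have hB : HasSum (fun j : ℤ => p t (w - 2 - 4 * j)) (Pbar p t (w - 2)) :=
    (H.sum t ht (w - 2)).hasSum
  have heA : ((f ∘ Subtype.val) ∘ eEven) = fun j : ℤ => p t (w - 4 * j) := by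
    funext j
    show p t (w - 2 * ((2 * j : ℤ) : ℝ)) = p t (w - 4 * j)
    congr 1
    push_cast
    ring
  have heB : ((f ∘ Subtype.val) ∘ eOdd) = fun j : ℤ => p t (w - 2 - 4 * j) := by
    funext j
    show p t (w - 2 * ((2 * j + 1 : ℤ) : ℝ)) = p t (w - 2 - 4 * j)
    congr 1
    push_cast
    ring
  have hA' : HasSum (f ∘ Subtype.val : {k : ℤ | Even k} → ℝ) (Pbar p t w) :=
    eEven.hasSum_iff.1 (heA ▸ hA)
  have hB' : HasSum (f ∘ Subtype.val : {k : ℤ | ¬ Even k} → ℝ) (Pbar p t (w - 2)) :=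
    eOdd.hasSum_iff.1 (heB ▸ hB)
  have hcompl : IsCompl {k : ℤ | Even k} {k : ℤ | ¬ Even k} := isCompl_compl
  exact (hA'.add_isCompl hcompl hB').tsum_eq


theorem scalingEq (a : ℝ) (ha : 0 < a) (p : ℝ → ℝ → ℝ)
    (hscal : ∀ t, 0 < t → ∀ u : ℝ, p t u = t ^ (-1 / a) * p 1 (t ^ (-1 / a) * u))
    (r : ℝ) (hr : 0 < r) (t : ℝ) (ht : 0 < t) (u : ℝ) :
    piReflR p t r u = (1 / r) * piRefl p (t * r ^ (-a)) (u / r) := by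
  have hm : (0:ℝ) < r ^ (-a) := Real.rpow_pos_of_pos hr _
  have htm : 0 < t * r ^ (-a) := mul_pos ht hm
  have hkey : (t * r ^ (-a)) ^ (-1/a) = t ^ (-1/a) * r := by
    rw [Real.mul_rpow ht.le (le_of_lt hm), ← Real.rpow_mul hr.le]
    congr 1
    rw [show -a * (-1/a) = 1 by field_simp, Real.rpow_one]
  unfold piReflR piRefl
  rw [← tsum_mul_left]
  apply tsum_congr
  intro k
  rw [hscal t ht, hscal _ htm, hkey]
  have : t ^ (-1/a) * r * (u / r - 2 * k) = t ^ (-1/a) * (u - 2 * r * k) := by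
    field_simp
  rw [this]
  field_simp

end L2Aux

end L2AuxSec


/-- (Lemma 2) For `r > 0`, `m = r^{-a}`: `π_{t,r}(u) = (1/r) π_{tm}(u/r)` on `[-r,r]`,
and for `tm ≥ 1`, with `K = ⌊tm⌋`,
`sup_{u ∈ [-r,r]} |π_{t,r}(u) - 1/(2r)| ≤ (2/r)(1 - 4Q₁)^(K-1) sup_{u ∈ [-2,2)} |P̄₁(u) - 1/4|`. -/
theorem lemma2 (a : ℝ) (ha : 0 < a) (ha2 : a ≤ 2) (p : ℝ → ℝ → ℝ)
    (hmeas : ∀ t, 0 < t → Measurable (p t))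
    (hnn : ∀ t, 0 < t → ∀ u, 0 ≤ p t u)
    (heven : ∀ t, 0 < t → ∀ u, p t (-u) = p t u)
    (hone : ∀ t, 0 < t → ∫ u, p t u = 1)
    (hbdd : ∀ t, 0 < t → ∃ C : ℝ, ∀ u, p t u ≤ C)
    (hconv : ∀ s t : ℝ, 0 < s → 0 < t → ∀ u, p (s + t) u = ∫ v, p s v * p t (u - v))
    (hsum : ∀ t, 0 < t → ∀ u : ℝ, Summable fun k : ℤ => p t (u - 4 * k))
    (hQ : ∀ t, 0 < t → 0 < Qinf p t)
    (hscal : ∀ t, 0 < t → ∀ u : ℝ, p t u = t ^ (-1 / a) * p 1 (t ^ (-1 / a) * u))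
    (r : ℝ) (hr : 0 < r) (t : ℝ) (ht : 0 < t) :
    (∀ u ∈ Set.Icc (-r) r, piReflR p t r u = (1 / r) * piRefl p (t * r ^ (-a)) (u / r)) ∧
    (1 ≤ t * r ^ (-a) →
      sSup ((fun u => |piReflR p t r u - 1 / (2 * r)|) '' Set.Icc (-r) r)
        ≤ (2 / r) * (1 - 4 * Qinf p 1) ^ (⌊t * r ^ (-a)⌋₊ - 1) *
            sSup ((fun u => |Pbar p 1 u - 1 / 4|) '' Set.Ico (-2 : ℝ) 2)) := by
  have H : L2Aux.Nice p := ⟨hmeas, hnn, heven, hone, hbdd, hconv, hsum⟩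
  have hm : (0:ℝ) < r ^ (-a) := Real.rpow_pos_of_pos hr _
  have htm0 : 0 < t * r ^ (-a) := mul_pos ht hm
  have hpart1 : ∀ u : ℝ, piReflR p t r u = (1 / r) * piRefl p (t * r ^ (-a)) (u / r) :=
    L2Aux.scalingEq a ha p hscal r hr t ht
  refine ⟨fun u _ => hpart1 u, fun htm => ?_⟩
  set M₁ := sSup ((fun u => |Pbar p 1 u - 1 / 4|) '' Set.Ico (-2 : ℝ) 2) with hM₁def
  set K := ⌊t * r ^ (-a)⌋₊ with hKdef
  have hK1 : 1 ≤ K := Nat.le_floor (by exact_mod_cast htm)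
  have hchain : ∀ w, |Pbar p (t * r ^ (-a)) w - 1/4|
      ≤ (1 - 4 * Qinf p 1) ^ (K - 1) * M₁ :=
    L2Aux.chain H (K - 1) _ htm (by omega)
  have hQ1 : 0 ≤ 1 - 4 * Qinf p 1 := by linarith [L2Aux.four_Qinf_le_one H one_pos]
  have hM1nn : 0 ≤ M₁ := L2Aux.M_nonneg H
  have hRHSnn : 0 ≤ (2 / r) * (1 - 4 * Qinf p 1) ^ (K - 1) * M₁ :=
    mul_nonneg (mul_nonneg (by positivity) (pow_nonneg hQ1 _)) hM1nn
  apply Real.sSup_le _ hRHSnn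
  rintro x ⟨u, _, rfl⟩
  show |piReflR p t r u - 1 / (2 * r)| ≤ _
  rw [hpart1 u, L2Aux.piRefl_split H htm0 (u / r)]
  have e : (1/r) * (Pbar p (t * r ^ (-a)) (u / r) + Pbar p (t * r ^ (-a)) (u / r - 2))
        - 1 / (2 * r)
      = (1/r) * ((Pbar p (t * r ^ (-a)) (u / r) - 1/4)
        + (Pbar p (t * r ^ (-a)) (u / r - 2) - 1/4)) := by
    field_simp
    ring
  rw [show (1 / r) * (Pbar p (t * r ^ (-a)) (u / r) + Pbar p (t * r ^ (-a)) (u / r - 2))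
        - 1 / (2 * r)
      = (1/r) * ((Pbar p (t * r ^ (-a)) (u / r) - 1/4)
        + (Pbar p (t * r ^ (-a)) (u / r - 2) - 1/4)) from e,
    abs_mul, abs_of_nonneg (by positivity : (0:ℝ) ≤ 1/r)]
  have tin : |(Pbar p (t * r ^ (-a)) (u / r) - 1/4)
        + (Pbar p (t * r ^ (-a)) (u / r - 2) - 1/4)|
      ≤ (1 - 4 * Qinf p 1) ^ (K - 1) * M₁ + (1 - 4 * Qinf p 1) ^ (K - 1) * M₁ :=
    le_trans (abs_add_le _ _) (add_le_add (hchain _) (hchain _))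
  calc (1/r) * |(Pbar p (t * r ^ (-a)) (u / r) - 1/4)
        + (Pbar p (t * r ^ (-a)) (u / r - 2) - 1/4)|
      ≤ (1/r) * ((1 - 4 * Qinf p 1) ^ (K - 1) * M₁ + (1 - 4 * Qinf p 1) ^ (K - 1) * M₁) :=
        mul_le_mul_of_nonneg_left tin (by positivity)
    _ = (2 / r) * (1 - 4 * Qinf p 1) ^ (K - 1) * M₁ := by ring
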